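/- Let (Q, Σ, π) be a measure space, let H be a separable real Hilbert space, let A : Q → L(H, H) satisfy q ↦ A(q)x measurable for every x and ‖A(q)‖ ≤ M π-a.e., and let 𝒜 be a bounded operator on ℋ = L²_π(Q; H) with (𝒜v)(q) = A(q)(v(q)) π-a.e. for every v ∈ ℋ. Let C : Q → L(H, ℝ) satisfy q ↦ C(q)x measurable for every x ∈ H and ‖C(q)‖ ≤ K π-a.e. Then for every v ∈ ℋ and every t ∈ ℝ, the population output equals the expected individual output: ∫_Q C(q)((exp(t𝒜)v)(q)) dπ(q) = ∫_Q C(q)(exp(t·A(q))(v(q))) dπ(q), i.e., the averaged output functional applied to the averaged-system state equals E_π of the pointwise outputs C(q)exp(tA(q))v(q). -/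

import Mathlib

open MeasureTheory

/-- The ring of bounded operators on `L²_π(Q; H)` is a topological ring (helper instance). -/
noncomputable instance topRingCLMLp {Q : Type*} [MeasurableSpace Q] {π : Measure Q}
    {H : Type*} [NormedAddCommGroup H] [InnerProductSpace ℝ H] :
    IsTopologicalRing (Lp H 2 π →L[ℝ] Lp H 2 π) := by
  exact @NonUnitalSeminormedRing.toIsTopologicalRing (Lp H 2 π →L[ℝ] Lp H 2 π) _

set_option maxHeartbeats 2000000 in
/-- The population output equals the expected individual output (identity (3.7) of the paper,
bounded-operator version): if `𝒜` acts pointwise on `ℋ = L²_π(Q; H)` as the π-a.e. uniformly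
bounded measurable family `A(q)`, and `C(q)` is a π-a.e. uniformly bounded measurable family
of output functionals, then
`∫ C(q)((exp(t𝒜)v)(q)) dπ = ∫ C(q)(exp(t·A(q))(v(q))) dπ`. -/
theorem population_output_eq_expected_individual_output
    {Q : Type*} [MeasurableSpace Q] (π : Measure Q)
    {H : Type*} [NormedAddCommGroup H] [InnerProductSpace ℝ H] [CompleteSpace H]
    [TopologicalSpace.SeparableSpace H] [MeasurableSpace H] [BorelSpace H]
    (M : ℝ)
    (A : Q → H →L[ℝ] H)
    (hAmeas : ∀ x : H, Measurable fun q => A q x)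
    (hAbdd : ∀ᵐ q ∂π, ‖A q‖ ≤ M)
    (𝒜 : Lp H 2 π →L[ℝ] Lp H 2 π)
    (h𝒜 : ∀ v : Lp H 2 π, (𝒜 v : Q → H) =ᵐ[π] fun q => A q (v q))
    (K : ℝ)
    (C : Q → H →L[ℝ] ℝ)
    (hCmeas : ∀ x : H, Measurable fun q => C q x)
    (hCbdd : ∀ᵐ q ∂π, ‖C q‖ ≤ K) :
    ∀ (v : Lp H 2 π) (t : ℝ),
      ∫ q, C q (NormedSpace.exp (t • 𝒜) v q) ∂π =
        ∫ q, C q (NormedSpace.exp (t • A q) (v q)) ∂π := by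
  intro v t
  -- powers act pointwise
  have hpow : ∀ n : ℕ, (((t • 𝒜) ^ n) v : Q → H) =ᵐ[π] fun q => ((t • A q) ^ n) (v q) := by
    intro n
    induction n with
    | zero =>
      simp only [pow_zero, ContinuousLinearMap.one_apply]
      exact Filter.EventuallyEq.rfl
    | succ n ih =>
      have h1 : ((t • 𝒜) ^ (n + 1)) v = t • (𝒜 (((t • 𝒜) ^ n) v)) := by
        rw [pow_succ']
        simp [ContinuousLinearMap.mul_apply]
      rw [h1]
      calc ((t • (𝒜 (((t • 𝒜) ^ n) v)) : Lp H 2 π) : Q → H)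
          =ᵐ[π] fun q => t • ((𝒜 (((t • 𝒜) ^ n) v) : Q → H) q) := Lp.coeFn_smul t _
        _ =ᵐ[π] fun q => t • (A q ((((t • 𝒜) ^ n) v : Q → H) q)) := by
            filter_upwards [h𝒜 (((t • 𝒜) ^ n) v)] with q hq
            rw [hq]
        _ =ᵐ[π] fun q => ((t • A q) ^ (n + 1)) (v q) := by
            filter_upwards [ih] with q hq
            rw [hq, pow_succ']
            simp [ContinuousLinearMap.mul_apply]
  -- partial-sum operators
  set S : ℕ → (Lp H 2 π →L[ℝ] Lp H 2 π) :=
    fun N => ∑ n ∈ Finset.range N, ((n.factorial : ℝ)⁻¹) • (t • 𝒜) ^ n with hS_def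
  have hS : ∀ N : ℕ, ((S N) v : Q → H) =ᵐ[π]
      fun q => ∑ n ∈ Finset.range N, ((n.factorial : ℝ)⁻¹) • (((t • A q) ^ n) (v q)) := by
    intro N
    induction N with
    | zero =>
      simp only [hS_def, Finset.range_zero, Finset.sum_empty]
      exact Lp.coeFn_zero H 2 π
    | succ N ih =>
      have h1 : S (N + 1) v = S N v + (((N.factorial : ℝ)⁻¹) • (t • 𝒜) ^ N) v := by
        simp [hS_def, Finset.sum_range_succ]
      rw [h1]
      calc ((S N v + (((N.factorial : ℝ)⁻¹) • (t • 𝒜) ^ N) v : Lp H 2 π) : Q → H)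
          =ᵐ[π] fun q => (S N v : Q → H) q +
            ((((N.factorial : ℝ)⁻¹) • (t • 𝒜) ^ N) v : Q → H) q := Lp.coeFn_add _ _
        _ =ᵐ[π] fun q => (S N v : Q → H) q +
            ((N.factorial : ℝ)⁻¹) • ((((t • 𝒜) ^ N) v : Q → H) q) := by
            have h2 : ((((N.factorial : ℝ)⁻¹) • (t • 𝒜) ^ N) v : Lp H 2 π)
                = ((N.factorial : ℝ)⁻¹) • (((t • 𝒜) ^ N) v) := rfl
            rw [h2]
            filter_upwards [Lp.coeFn_smul ((N.factorial : ℝ)⁻¹) (((t • 𝒜) ^ N) v)] with q hq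
            rw [hq]
            rfl
        _ =ᵐ[π] fun q => ∑ n ∈ Finset.range (N + 1),
            ((n.factorial : ℝ)⁻¹) • (((t • A q) ^ n) (v q)) := by
            filter_upwards [ih, hpow N] with q h1 h2
            rw [h1, h2, Finset.sum_range_succ]
  -- Lp convergence of partial sums to the exponential applied to v
  have hsumOp := NormedSpace.exp_series_hasSum_exp' (𝕂 := ℝ) (t • 𝒜)
  have hTendOp : Filter.Tendsto S Filter.atTop (nhds (NormedSpace.exp (t • 𝒜))) :=
    hsumOp.tendsto_sum_nat
  have hTendv : Filter.Tendsto (fun N => (S N) v) Filter.atTop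
      (nhds (NormedSpace.exp (t • 𝒜) v)) := by
    have hc : Continuous fun T : Lp H 2 π →L[ℝ] Lp H 2 π => T v :=
      (ContinuousLinearMap.apply ℝ (Lp H 2 π) v).continuous
    exact (hc.tendsto _).comp hTendOp
  have hMeas : TendstoInMeasure π (fun N => ((S N) v : Q → H)) Filter.atTop
      (NormedSpace.exp (t • 𝒜) v : Q → H) :=
    tendstoInMeasure_of_tendsto_Lp hTendv
  obtain ⟨ns, hns, hae⟩ := hMeas.exists_seq_tendsto_ae
  -- pointwise convergence of the scalar partial sums
  have hptwise : ∀ q : Q, Filter.Tendsto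
      (fun N => ∑ n ∈ Finset.range N, ((n.factorial : ℝ)⁻¹) • (((t • A q) ^ n) (v q)))
      Filter.atTop (nhds (NormedSpace.exp (t • A q) (v q))) := by
    intro q
    have h1 := NormedSpace.exp_series_hasSum_exp' (𝕂 := ℝ) (t • A q)
    have h2 := h1.mapL (ContinuousLinearMap.apply ℝ H (v q))
    simp only [ContinuousLinearMap.apply_apply, ContinuousLinearMap.coe_smul',
      Pi.smul_apply] at h2
    exact h2.tendsto_sum_nat
  -- identify the two limits a.e.
  have hmain : (NormedSpace.exp (t • 𝒜) v : Q → H) =ᵐ[π]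
      fun q => NormedSpace.exp (t • A q) (v q) := by
    have hallS : ∀ᵐ q ∂π, ∀ N : ℕ, ((S N) v : Q → H) q
        = ∑ n ∈ Finset.range N, ((n.factorial : ℝ)⁻¹) • (((t • A q) ^ n) (v q)) :=
      (ae_all_iff).2 hS
    filter_upwards [hae, hallS] with q h1 h2
    have h3 : Filter.Tendsto (fun k => ((S (ns k)) v : Q → H) q) Filter.atTop
        (nhds (NormedSpace.exp (t • A q) (v q))) := by
      have := ((hptwise q).comp hns.tendsto_atTop)
      simpa only [Function.comp_def, h2] using this
    exact tendsto_nhds_unique h1 h3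
  refine integral_congr_ae ?_
  filter_upwards [hmain] with q hq
  rw [hq]
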